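/- Let ψ, φ ∈ S_F(ℝⁿ × ℝᵐ) be flag test functions, i.e., there exist ψ♯, φ♯ ∈ S_∞(ℝ^{n+m} × ℝᵐ) with ψ(x,y) = ∫_{ℝᵐ} ψ♯(x, y−z, z) dz and φ(x,y) = ∫_{ℝᵐ} φ♯(x, y−z, z) dz. Then the convolution on ℝⁿ × ℝᵐ satisfies (ψ ∗ φ)(x,y) = ∫_{ℝᵐ} (ψ♯ ∗ φ♯)(x, y−z, z) dz, where on the right the convolution is taken on ℝ^{n+m+m}. -/

import Mathlib

open MeasureTheory

section FlagAux

lemma flag_schwartz_decay {E : Type*} [NormedAddCommGroup E] [NormedSpace ℝ E]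
    (f : SchwartzMap E ℝ) (k : ℕ) :
    ∃ C : ℝ, 0 ≤ C ∧ ∀ p : E, ‖f p‖ ≤ C * (((1 : ℝ) + ‖p‖) ^ k)⁻¹ := by
  refine ⟨2 ^ k * (Finset.Iic (k, 0)).sup (fun mn => SchwartzMap.seminorm ℝ mn.1 mn.2) f, ?_, ?_⟩
  · have h0 := apply_nonneg ((Finset.Iic ((k : ℕ), (0 : ℕ))).sup
      (fun mn : ℕ × ℕ => SchwartzMap.seminorm ℝ (E := E) (F := ℝ) mn.1 mn.2)) f
    positivity
  · intro p
    have h := SchwartzMap.one_add_le_sup_seminorm_apply (𝕜 := ℝ) (m := (k, 0)) le_rfl le_rfl f p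
    rw [norm_iteratedFDeriv_zero] at h
    have hp : (0 : ℝ) < (1 + ‖p‖) ^ k := by positivity
    rw [← div_eq_mul_inv, le_div_iff₀ hp, mul_comm]
    exact h

lemma flag_integrable_decay (d k : ℕ) (hk : d < k) :
    Integrable (fun z : Fin d → ℝ => (((1 : ℝ) + ‖z‖) ^ k)⁻¹) := by
  have h : Integrable (fun z : Fin d → ℝ => ((1 : ℝ) + ‖z‖) ^ (-(k : ℝ))) :=
    integrable_one_add_norm (by
      rw [Module.finrank_fintype_fun_eq_card, Fintype.card_fin]; exact_mod_cast hk)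
  refine h.congr (Filter.Eventually.of_forall fun z => ?_)
  simp only
  rw [Real.rpow_neg (by positivity), Real.rpow_natCast]

lemma flag_mp_integrable {α β : Type*} [MeasurableSpace α] [MeasurableSpace β]
    {μ : Measure α} {ν : Measure β} {T : α → β} (hT : MeasurePreserving T μ ν)
    {h : β → ℝ} (hmeas : AEStronglyMeasurable h ν) (hint : Integrable h ν) :
    Integrable (fun a => h (T a)) μ := by
  rw [← hT.map_eq] at hint hmeas
  exact (integrable_map_measure hmeas hT.measurable.aemeasurable).mp hint

lemma flag_mp_integral {α β : Type*} [MeasurableSpace α] [MeasurableSpace β]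
    {μ : Measure α} {ν : Measure β} {T : α → β} (hT : MeasurePreserving T μ ν)
    {h : β → ℝ} (hmeas : AEStronglyMeasurable h ν) :
    ∫ a, h (T a) ∂μ = ∫ b, h b ∂ν := by
  conv_rhs => rw [← hT.map_eq]
  rw [integral_map hT.measurable.aemeasurable (by rw [hT.map_eq]; exact hmeas)]

end FlagAux

/-- Lemma 3.3: if `ψ, φ ∈ S_F(ℝⁿ × ℝᵐ)` are the flag projections of product test functions
`ψ♯, φ♯ ∈ S_∞(ℝ^{n+m} × ℝᵐ)` (Schwartz with vanishing moments), i.e.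
`ψ(x,y) = ∫ ψ♯(x, y-z, z) dz`, then `(ψ ∗ φ)(x,y) = ∫ (ψ♯ ∗ φ♯)(x, y-z, z) dz`,
the convolution on the right being taken on `ℝ^{n+m+m}`. -/
theorem stmt3 {n m : ℕ}
    (ψs φs : SchwartzMap ((Fin n → ℝ) × (Fin m → ℝ) × (Fin m → ℝ)) ℝ)
    (hψmom1 : ∀ (α : Fin n → ℕ) (β : Fin m → ℕ) (z : Fin m → ℝ),
      ∫ xy : (Fin n → ℝ) × (Fin m → ℝ),
        ψs (xy.1, xy.2, z) * ((∏ i, xy.1 i ^ α i) * ∏ i, xy.2 i ^ β i) = 0)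
    (hψmom2 : ∀ (γ : Fin m → ℕ) (x : Fin n → ℝ) (y : Fin m → ℝ),
      ∫ z : Fin m → ℝ, ψs (x, y, z) * ∏ i, z i ^ γ i = 0)
    (hφmom1 : ∀ (α : Fin n → ℕ) (β : Fin m → ℕ) (z : Fin m → ℝ),
      ∫ xy : (Fin n → ℝ) × (Fin m → ℝ),
        φs (xy.1, xy.2, z) * ((∏ i, xy.1 i ^ α i) * ∏ i, xy.2 i ^ β i) = 0)
    (hφmom2 : ∀ (γ : Fin m → ℕ) (x : Fin n → ℝ) (y : Fin m → ℝ),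
      ∫ z : Fin m → ℝ, φs (x, y, z) * ∏ i, z i ^ γ i = 0)
    (x : Fin n → ℝ) (y : Fin m → ℝ) :
    (∫ uv : (Fin n → ℝ) × (Fin m → ℝ),
        (∫ z : Fin m → ℝ, ψs (x - uv.1, y - uv.2 - z, z)) *
        (∫ z : Fin m → ℝ, φs (uv.1, uv.2 - z, z))) =
      ∫ z : Fin m → ℝ,
        ∫ q : (Fin n → ℝ) × (Fin m → ℝ) × (Fin m → ℝ),
          ψs (x - q.1, y - z - q.2.1, z - q.2.2) * φs q := by
  classical
  haveI hHaarUV : Measure.IsAddHaarMeasure (volume : Measure ((Fin n → ℝ) × (Fin m → ℝ))) := by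
    rw [Measure.volume_eq_prod]; exact Measure.prod.instIsAddHaarMeasure _ _
  haveI hHaarVV : Measure.IsAddHaarMeasure (volume : Measure ((Fin m → ℝ) × (Fin m → ℝ))) := by
    rw [Measure.volume_eq_prod]; exact Measure.prod.instIsAddHaarMeasure _ _
  haveI hHaarUVV : Measure.IsAddHaarMeasure
      (volume : Measure ((Fin n → ℝ) × (Fin m → ℝ) × (Fin m → ℝ))) := by
    rw [Measure.volume_eq_prod]; exact Measure.prod.instIsAddHaarMeasure _ _
  -- decay bound for `ψs` in the last coordinate
  obtain ⟨C, hC0, hC⟩ := flag_schwartz_decay ψs (m + 1)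
  set g : (Fin m → ℝ) → ℝ := fun c => C * (((1 : ℝ) + ‖c‖) ^ (m + 1))⁻¹ with hgdef
  have hgint : Integrable g := (flag_integrable_decay m (m + 1) (by omega)).const_mul C
  have hgcont : Continuous g := by
    have h1 : Continuous fun c : Fin m → ℝ => ((1 : ℝ) + ‖c‖) ^ (m + 1) := by fun_prop
    exact continuous_const.mul (h1.inv₀ (fun c => by positivity))
  have hψb : ∀ (a : Fin n → ℝ) (b c : Fin m → ℝ), ‖ψs (a, b, c)‖ ≤ g c := by
    intro a b c
    refine (hC (a, b, c)).trans ?_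
    have h2 : ((1 : ℝ) + ‖c‖) ^ (m + 1) ≤
        (1 + ‖((a, b, c) : (Fin n → ℝ) × (Fin m → ℝ) × (Fin m → ℝ))‖) ^ (m + 1) := by
      gcongr
      exact le_trans (norm_snd_le ((b, c) : (Fin m → ℝ) × (Fin m → ℝ)))
        (norm_snd_le ((a, (b, c)) : (Fin n → ℝ) × ((Fin m → ℝ) × (Fin m → ℝ))))
    exact mul_le_mul_of_nonneg_left (inv_anti₀ (by positivity) h2) hC0
  -- the flag projection of `ψs`
  set Pψ : (Fin n → ℝ) × (Fin m → ℝ) → ℝ :=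
    fun p => ∫ z : Fin m → ℝ, ψs (p.1, p.2 - z, z) with hPdef
  have hPb : ∀ p, ‖Pψ p‖ ≤ ∫ z : Fin m → ℝ, g z := by
    intro p
    refine (norm_integral_le_integral_norm _).trans ?_
    exact integral_mono_of_nonneg (Filter.Eventually.of_forall fun z => norm_nonneg _) hgint
      (Filter.Eventually.of_forall fun z => hψb _ _ z)
  have hPc : Continuous Pψ := by
    rw [hPdef]
    refine continuous_of_dominated (bound := g) (fun p => ?_)
      (fun p => Filter.Eventually.of_forall fun z => hψb _ _ z) hgint
      (Filter.Eventually.of_forall fun z => ?_)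
    · exact (ψs.continuous.comp (by fun_prop)).aestronglyMeasurable
    · exact ψs.continuous.comp (by fun_prop)
  have hφc : Continuous φs := φs.continuous
  have hφint : Integrable (fun q : (Fin n → ℝ) × (Fin m → ℝ) × (Fin m → ℝ) => φs q) :=
    φs.integrable
  -- measure preserving maps
  have hT1 : MeasurePreserving
      (fun p : ((Fin n → ℝ) × (Fin m → ℝ)) × (Fin m → ℝ) =>
        ((p.1.1, (p.1.2 - p.2, p.2)) : (Fin n → ℝ) × (Fin m → ℝ) × (Fin m → ℝ)))
      volume volume := by
    have h1 : MeasurePreserving (MeasurableEquiv.prodAssoc :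
        ((Fin n → ℝ) × (Fin m → ℝ)) × (Fin m → ℝ) ≃ᵐ
          (Fin n → ℝ) × (Fin m → ℝ) × (Fin m → ℝ)) volume volume :=
      volume_preserving_prodAssoc
    have hsub : MeasurePreserving
        (fun r : (Fin m → ℝ) × (Fin m → ℝ) => (r.1 - r.2, r.2)) volume volume := by
      have := measurePreserving_sub_prod (volume : Measure (Fin m → ℝ))
        (volume : Measure (Fin m → ℝ))
      rwa [← Measure.volume_eq_prod] at this
    have h2 : MeasurePreserving
        (Prod.map (id : (Fin n → ℝ) → (Fin n → ℝ))
          (fun r : (Fin m → ℝ) × (Fin m → ℝ) => (r.1 - r.2, r.2))) volume volume := by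
      have := (MeasurePreserving.id (volume : Measure (Fin n → ℝ))).prod hsub
      rwa [← Measure.volume_eq_prod] at this
    exact h2.comp h1
  have he : MeasurePreserving
      (fun p : (Fin m → ℝ) × ((Fin n → ℝ) × (Fin m → ℝ)) =>
        ((p.2.1, (p.2.2, p.1)) : (Fin n → ℝ) × (Fin m → ℝ) × (Fin m → ℝ))) volume volume := by
    have h1 : MeasurePreserving
        (Prod.swap : (Fin m → ℝ) × ((Fin n → ℝ) × (Fin m → ℝ)) →
          ((Fin n → ℝ) × (Fin m → ℝ)) × (Fin m → ℝ)) volume volume := by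
      have := Measure.measurePreserving_swap (μ := (volume : Measure (Fin m → ℝ)))
        (ν := (volume : Measure ((Fin n → ℝ) × (Fin m → ℝ))))
      rwa [← Measure.volume_eq_prod] at this
    have h2 : MeasurePreserving (MeasurableEquiv.prodAssoc :
        ((Fin n → ℝ) × (Fin m → ℝ)) × (Fin m → ℝ) ≃ᵐ
          (Fin n → ℝ) × (Fin m → ℝ) × (Fin m → ℝ)) volume volume :=
      volume_preserving_prodAssoc
    exact h2.comp h1
  have hTz : MeasurePreserving
      (fun p : (Fin m → ℝ) × ((Fin n → ℝ) × (Fin m → ℝ) × (Fin m → ℝ)) =>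
        ((p.1 - p.2.2.2, p.2) : (Fin m → ℝ) × ((Fin n → ℝ) × (Fin m → ℝ) × (Fin m → ℝ))))
      volume volume := by
    have hsw1 : MeasurePreserving
        (Prod.swap : (Fin m → ℝ) × ((Fin n → ℝ) × (Fin m → ℝ) × (Fin m → ℝ)) →
          ((Fin n → ℝ) × (Fin m → ℝ) × (Fin m → ℝ)) × (Fin m → ℝ)) volume volume := by
      have := Measure.measurePreserving_swap (μ := (volume : Measure (Fin m → ℝ)))
        (ν := (volume : Measure ((Fin n → ℝ) × (Fin m → ℝ) × (Fin m → ℝ))))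
      rwa [← Measure.volume_eq_prod] at this
    have hsw2 : MeasurePreserving
        (Prod.swap : ((Fin n → ℝ) × (Fin m → ℝ) × (Fin m → ℝ)) × (Fin m → ℝ) →
          (Fin m → ℝ) × ((Fin n → ℝ) × (Fin m → ℝ) × (Fin m → ℝ))) volume volume := by
      have := Measure.measurePreserving_swap
        (μ := (volume : Measure ((Fin n → ℝ) × (Fin m → ℝ) × (Fin m → ℝ))))
        (ν := (volume : Measure (Fin m → ℝ)))
      rwa [← Measure.volume_eq_prod] at this
    have hskew : MeasurePreserving
        (fun p : ((Fin n → ℝ) × (Fin m → ℝ) × (Fin m → ℝ)) × (Fin m → ℝ) =>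
          ((p.1, p.2 - p.1.2.2) : ((Fin n → ℝ) × (Fin m → ℝ) × (Fin m → ℝ)) × (Fin m → ℝ)))
        volume volume := by
      have := (MeasurePreserving.id
          (volume : Measure ((Fin n → ℝ) × (Fin m → ℝ) × (Fin m → ℝ)))).skew_product
        (g := fun q z => z - q.2.2) (by fun_prop)
        (Filter.Eventually.of_forall fun q =>
          map_sub_right_eq_self (volume : Measure (Fin m → ℝ)) q.2.2)
      rwa [← Measure.volume_eq_prod] at this
    exact hsw2.comp (hskew.comp hsw1)
  -- integrability facts
  have hI1 : Integrable
      (fun p : ((Fin n → ℝ) × (Fin m → ℝ)) × (Fin m → ℝ) =>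
        Pψ (x - p.1.1, y - p.1.2) * φs (p.1.1, p.1.2 - p.2, p.2)) := by
    have hcomp : Integrable
        (fun p : ((Fin n → ℝ) × (Fin m → ℝ)) × (Fin m → ℝ) =>
          φs (p.1.1, p.1.2 - p.2, p.2)) :=
      flag_mp_integrable hT1 hφc.aestronglyMeasurable hφint
    exact hcomp.bdd_mul ((hPc.comp (by fun_prop)).aestronglyMeasurable)
      (Filter.Eventually.of_forall fun p => hPb _)
  have hH : Integrable
      (fun q : (Fin n → ℝ) × (Fin m → ℝ) × (Fin m → ℝ) =>
        Pψ (x - q.1, y - q.2.1 - q.2.2) * φs q) :=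
    hφint.bdd_mul ((hPc.comp (by fun_prop)).aestronglyMeasurable)
      (Filter.Eventually.of_forall fun q => hPb _)
  have hI2 : Integrable
      (fun p : (Fin m → ℝ) × ((Fin n → ℝ) × (Fin m → ℝ)) =>
        Pψ (x - p.2.1, y - p.2.2 - p.1) * φs (p.2.1, p.2.2, p.1)) :=
    flag_mp_integrable he hH.aestronglyMeasurable hH
  have hIz : Integrable
      (fun p : (Fin m → ℝ) × ((Fin n → ℝ) × (Fin m → ℝ) × (Fin m → ℝ)) =>
        ψs (x - p.2.1, y - p.1 - p.2.2.1, p.1 - p.2.2.2) * φs p.2) := by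
    have hb0 : Integrable
        (fun r : (Fin m → ℝ) × ((Fin n → ℝ) × (Fin m → ℝ) × (Fin m → ℝ)) =>
          g r.1 * ‖φs r.2‖) := by
      have := hgint.mul_prod hφint.norm
      rwa [← Measure.volume_eq_prod] at this
    have hbnd : Integrable
        (fun p : (Fin m → ℝ) × ((Fin n → ℝ) × (Fin m → ℝ) × (Fin m → ℝ)) =>
          g (p.1 - p.2.2.2) * ‖φs p.2‖) :=
      flag_mp_integrable hTz
        (((hgcont.comp continuous_fst).mul
          ((hφc.comp continuous_snd).norm)).aestronglyMeasurable) hb0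
    refine hbnd.mono' ?_ ?_
    · exact ((ψs.continuous.comp (by fun_prop)).mul
        (hφc.comp continuous_snd)).aestronglyMeasurable
    · refine Filter.Eventually.of_forall fun p => ?_
      rw [norm_mul]
      exact mul_le_mul_of_nonneg_right (hψb _ _ _) (norm_nonneg _)
  -- the main chain of equalities
  calc
    (∫ uv : (Fin n → ℝ) × (Fin m → ℝ),
        (∫ z : Fin m → ℝ, ψs (x - uv.1, y - uv.2 - z, z)) *
        (∫ z : Fin m → ℝ, φs (uv.1, uv.2 - z, z)))
        = ∫ uv : (Fin n → ℝ) × (Fin m → ℝ), ∫ t : Fin m → ℝ,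
            Pψ (x - uv.1, y - uv.2) * φs (uv.1, uv.2 - t, t) := by
          congr 1; funext uv
          simp only [hPdef]
          rw [integral_const_mul]
    _ = ∫ t : Fin m → ℝ, ∫ uv : (Fin n → ℝ) × (Fin m → ℝ),
            Pψ (x - uv.1, y - uv.2) * φs (uv.1, uv.2 - t, t) := by
          refine integral_integral_swap ?_
          rw [← Measure.volume_eq_prod]
          exact hI1
    _ = ∫ t : Fin m → ℝ, ∫ uv : (Fin n → ℝ) × (Fin m → ℝ),
            Pψ (x - uv.1, y - uv.2 - t) * φs (uv.1, uv.2, t) := by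
          congr 1; funext t
          calc
            ∫ uv : (Fin n → ℝ) × (Fin m → ℝ),
                Pψ (x - uv.1, y - uv.2) * φs (uv.1, uv.2 - t, t)
              = ∫ uv : (Fin n → ℝ) × (Fin m → ℝ),
                  Pψ (x - (uv + ((0 : Fin n → ℝ), t)).1, y - (uv + ((0 : Fin n → ℝ), t)).2) *
                    φs ((uv + ((0 : Fin n → ℝ), t)).1, (uv + ((0 : Fin n → ℝ), t)).2 - t, t) :=
                (integral_add_right_eq_self
                  (fun w : (Fin n → ℝ) × (Fin m → ℝ) =>
                    Pψ (x - w.1, y - w.2) * φs (w.1, w.2 - t, t))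
                  ((0 : Fin n → ℝ), t)).symm
            _ = ∫ uv : (Fin n → ℝ) × (Fin m → ℝ),
                  Pψ (x - uv.1, y - uv.2 - t) * φs (uv.1, uv.2, t) := by
                congr 1; funext uv
                simp [Prod.fst_add, Prod.snd_add, sub_add_eq_sub_sub, add_sub_cancel_right]
    _ = ∫ p : (Fin m → ℝ) × ((Fin n → ℝ) × (Fin m → ℝ)),
            Pψ (x - p.2.1, y - p.2.2 - p.1) * φs (p.2.1, p.2.2, p.1) := by
          have h := integral_prod
            (fun p : (Fin m → ℝ) × ((Fin n → ℝ) × (Fin m → ℝ)) =>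
              Pψ (x - p.2.1, y - p.2.2 - p.1) * φs (p.2.1, p.2.2, p.1))
            (by rw [← Measure.volume_eq_prod]; exact hI2)
          rw [← Measure.volume_eq_prod] at h
          exact h.symm
    _ = ∫ q : (Fin n → ℝ) × (Fin m → ℝ) × (Fin m → ℝ),
            Pψ (x - q.1, y - q.2.1 - q.2.2) * φs q :=
          flag_mp_integral he hH.aestronglyMeasurable
    _ = ∫ q : (Fin n → ℝ) × (Fin m → ℝ) × (Fin m → ℝ), ∫ z : Fin m → ℝ,
            ψs (x - q.1, y - z - q.2.1, z - q.2.2) * φs q := by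
          congr 1; funext q
          calc
            Pψ (x - q.1, y - q.2.1 - q.2.2) * φs q
              = (∫ z : Fin m → ℝ, ψs (x - q.1, y - q.2.1 - q.2.2 - z, z)) * φs q := by
                simp only [hPdef]
            _ = ∫ z : Fin m → ℝ, ψs (x - q.1, y - q.2.1 - q.2.2 - z, z) * φs q := by
                rw [integral_mul_const]
            _ = ∫ z : Fin m → ℝ,
                  ψs (x - q.1, y - (z + q.2.2) - q.2.1, (z + q.2.2) - q.2.2) * φs q := by
                congr 1; funext z
                rw [add_sub_cancel_right,
                  show y - (z + q.2.2) - q.2.1 = y - q.2.1 - q.2.2 - z from by abel]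
            _ = ∫ z : Fin m → ℝ, ψs (x - q.1, y - z - q.2.1, z - q.2.2) * φs q :=
                integral_add_right_eq_self
                  (fun z : Fin m → ℝ => ψs (x - q.1, y - z - q.2.1, z - q.2.2) * φs q) q.2.2
    _ = ∫ z : Fin m → ℝ, ∫ q : (Fin n → ℝ) × (Fin m → ℝ) × (Fin m → ℝ),
            ψs (x - q.1, y - z - q.2.1, z - q.2.2) * φs q := by
          refine (integral_integral_swap ?_).symm
          rw [← Measure.volume_eq_prod]
          exact hIz
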